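/- A permutation σ of {1,…,n} can be written as a product of adjacent transpositions each of which swaps two elements not related by a partial order ≤ if and only if σ preserves ≤, i.e., for all i, j with i ≤ j (and i ≠ j in the order of positions), σ places i before j. Equivalently: the linear extensions of a partial order on a sequence are exactly the sequences reachable by repeatedly swapping adjacent incomparable elements. -/

import Mathlib

/-- One adjacent swap of two incomparable elements: the sequence represented
by the permutation `σ` (position `k` holds element `σ k`) has the elements at
positions `k` and `k+1` swapped, provided those two elements are incomparable
in the partial order `r`. -/
def IncompStep {n : ℕ} (r : Fin n → Fin n → Prop)
    (σ τ : Equiv.Perm (Fin n)) : Prop :=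
  ∃ (k : ℕ) (h1 : k < n) (h2 : k + 1 < n),
    ¬ r (σ ⟨k, h1⟩) (σ ⟨k + 1, h2⟩) ∧ ¬ r (σ ⟨k + 1, h2⟩) (σ ⟨k, h1⟩) ∧
    τ = σ * Equiv.swap ⟨k, h1⟩ ⟨k + 1, h2⟩

/-- Swapping `k` and `k+1` preserves strict order except on the pair `(k,k+1)`. -/
lemma swap_adj_lt {n k : ℕ} (h1 : k < n) (h2 : k + 1 < n) {a b : Fin n}
    (hab : a < b) (hne : ¬ (a = ⟨k, h1⟩ ∧ b = ⟨k + 1, h2⟩)) :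
    Equiv.swap ⟨k, h1⟩ ⟨k + 1, h2⟩ a < Equiv.swap ⟨k, h1⟩ ⟨k + 1, h2⟩ b := by
  have hne' : (a : ℕ) ≠ k ∨ (b : ℕ) ≠ k + 1 := by
    by_contra h
    push_neg at h
    exact hne ⟨Fin.ext h.1, Fin.ext h.2⟩
  rw [Fin.lt_def] at hab
  simp only [Equiv.swap_apply_def]
  split_ifs <;> simp_all only [Fin.lt_def, Fin.ext_iff] <;> omega

/-- `IncompStep` is a symmetric relation. -/
lemma IncompStep.symm {n : ℕ} {r : Fin n → Fin n → Prop} {σ τ : Equiv.Perm (Fin n)}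
    (h : IncompStep r σ τ) : IncompStep r τ σ := by
  obtain ⟨k, h1, h2, hi1, hi2, rfl⟩ := h
  refine ⟨k, h1, h2, ?_, ?_, ?_⟩
  · simpa [Equiv.swap_apply_left, Equiv.swap_apply_right] using hi2
  · simpa [Equiv.swap_apply_left, Equiv.swap_apply_right] using hi1
  · rw [mul_assoc, Equiv.swap_mul_self, mul_one]

/-- One incomparable step preserves the order-preserving property. -/
lemma step_preserves {n : ℕ} {r : Fin n → Fin n → Prop} {σ τ : Equiv.Perm (Fin n)}
    (hstep : IncompStep r σ τ)
    (hσ : ∀ i j : Fin n, r i j → i ≠ j → σ.symm i < σ.symm j) :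
    ∀ i j : Fin n, r i j → i ≠ j → τ.symm i < τ.symm j := by
  obtain ⟨k, h1, h2, hi1, hi2, rfl⟩ := hstep
  intro i j hr hij
  have hlt := hσ i j hr hij
  have hsymm : ∀ x : Fin n, (σ * Equiv.swap (⟨k, h1⟩ : Fin n) ⟨k + 1, h2⟩).symm x
      = Equiv.swap (⟨k, h1⟩ : Fin n) ⟨k + 1, h2⟩ (σ.symm x) := by
    intro x
    rw [Equiv.Perm.mul_def, Equiv.symm_trans_apply, Equiv.symm_swap]
  rw [hsymm, hsymm]
  apply swap_adj_lt h1 h2 hlt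
  rintro ⟨ha, hb⟩
  apply hi1
  have hik : i = σ ⟨k, h1⟩ := by
    have := congrArg σ ha; simpa using this
  have hjk : j = σ ⟨k + 1, h2⟩ := by
    have := congrArg σ hb; simpa using this
  rw [← hik, ← hjk]; exact hr

/-- A strictly monotone permutation of `Fin n` is the identity. -/
lemma strictMono_perm_eq_one {n : ℕ} (σ : Equiv.Perm (Fin n)) (h : StrictMono ⇑σ) :
    σ = 1 := by
  haveI inst : WellFoundedLT (Fin n) := inferInstance
  have h1 : ∀ x : Fin n, x ≤ σ x := fun x => @StrictMono.le_apply (Fin n) _ inst _ h x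
  have h2 : StrictMono ⇑σ.symm := fun a b hab => by
    have := h.lt_iff_lt (a := σ.symm a) (b := σ.symm b)
    simp only [Equiv.apply_symm_apply] at this
    exact this.mp hab
  have h3 : ∀ x : Fin n, x ≤ σ.symm x := fun x => @StrictMono.le_apply (Fin n) _ inst _ h2 x
  ext x
  have hx := h3 (σ x)
  simp only [Equiv.symm_apply_apply] at hx
  have : σ x = x := le_antisymm hx (h1 x)
  simpa using congrArg Fin.val this

/-- The inversion set of a permutation. -/
def InvSet {n : ℕ} (σ : Equiv.Perm (Fin n)) : Finset (Fin n × Fin n) :=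
  Finset.univ.filter (fun p => p.1 < p.2 ∧ σ p.2 < σ p.1)

lemma invset_decreases {n k : ℕ} (h1 : k < n) (h2 : k + 1 < n)
    (σ : Equiv.Perm (Fin n)) (hdesc : σ ⟨k + 1, h2⟩ < σ ⟨k, h1⟩) :
    (InvSet (σ * Equiv.swap ⟨k, h1⟩ ⟨k + 1, h2⟩)).card < (InvSet σ).card := by
  set s : Equiv.Perm (Fin n) := Equiv.swap ⟨k, h1⟩ ⟨k + 1, h2⟩ with hs
  set τ : Equiv.Perm (Fin n) := σ * s with hτ
  have hmap : ∀ p ∈ InvSet τ, (s p.1, s p.2) ∈ InvSet σ := by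
    rintro ⟨a, b⟩ hp
    simp only [InvSet, Finset.mem_filter, Finset.mem_univ, true_and] at hp ⊢
    obtain ⟨hab, hinv⟩ := hp
    have hne : ¬ (a = ⟨k, h1⟩ ∧ b = ⟨k + 1, h2⟩) := by
      rintro ⟨rfl, rfl⟩
      have h1' : τ ⟨k, h1⟩ = σ ⟨k + 1, h2⟩ := by
        simp [hτ, hs, Equiv.Perm.mul_apply, Equiv.swap_apply_left]
      have h2' : τ ⟨k + 1, h2⟩ = σ ⟨k, h1⟩ := by
        simp [hτ, hs, Equiv.Perm.mul_apply, Equiv.swap_apply_right]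
      rw [h1', h2'] at hinv
      exact absurd hinv (not_lt.mpr hdesc.le)
    refine ⟨swap_adj_lt h1 h2 hab hne, ?_⟩
    have ea : τ a = σ (s a) := rfl
    have eb : τ b = σ (s b) := rfl
    rw [← ea, ← eb]; exact hinv
  have hinj : Set.InjOn (fun p : Fin n × Fin n => (s p.1, s p.2)) (InvSet τ) := by
    intro p _ q _ hpq
    simp only [Prod.ext_iff] at hpq ⊢
    exact ⟨s.injective hpq.1, s.injective hpq.2⟩
  have hsub : Finset.image (fun p : Fin n × Fin n => (s p.1, s p.2)) (InvSet τ) ⊆ InvSet σ :=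
    Finset.image_subset_iff.mpr hmap
  have hmem : (⟨k, h1⟩, (⟨k + 1, h2⟩ : Fin n)) ∈ InvSet σ := by
    simp only [InvSet, Finset.mem_filter, Finset.mem_univ, true_and]
    exact ⟨by simp [Fin.lt_def], hdesc⟩
  have hnotmem : (⟨k, h1⟩, (⟨k + 1, h2⟩ : Fin n)) ∉
      Finset.image (fun p : Fin n × Fin n => (s p.1, s p.2)) (InvSet τ) := by
    simp only [Finset.mem_image, not_exists]
    rintro ⟨a, b⟩ ⟨hp, heq⟩
    simp only [Prod.mk.injEq] at heq
    have ha : a = ⟨k + 1, h2⟩ := by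
      have := congrArg s heq.1; simpa [hs] using this
    have hb : b = ⟨k, h1⟩ := by
      have := congrArg s heq.2; simpa [hs] using this
    simp only [InvSet, Finset.mem_filter, Finset.mem_univ, true_and] at hp
    rw [ha, hb] at hp
    exact absurd hp.1 (by simp [Fin.lt_def])
  calc (InvSet τ).card
      = (Finset.image (fun p : Fin n × Fin n => (s p.1, s p.2)) (InvSet τ)).card :=
        (Finset.card_image_of_injOn hinj).symm
    _ < (InvSet σ).card := Finset.card_lt_card (Finset.ssubset_iff_of_subset hsub |>.mpr
        ⟨_, hmem, hnotmem⟩)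

/-- for a partial order `r` on positions `{0,…,n-1}` refining the
position order, a permutation `σ` is reachable from the identity by adjacent
transpositions of `r`-incomparable elements iff `σ` preserves `r`, i.e. for
all `i ≠ j` with `r i j`, `σ` places `i` before `j`. (The linear extensions
of the partial order are exactly the sequences reachable by repeatedly
swapping adjacent incomparable elements.) -/
theorem reachable_by_incomparable_swaps_iff_order_preserving
    {n : ℕ} (r : Fin n → Fin n → Prop) [IsPartialOrder (Fin n) r]
    (hrefine : ∀ i j : Fin n, r i j → i ≤ j)
    (σ : Equiv.Perm (Fin n)) :
    Relation.ReflTransGen (IncompStep r) 1 σ ↔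
      ∀ i j : Fin n, r i j → i ≠ j → σ.symm i < σ.symm j := by
  constructor
  · intro h
    induction h with
    | refl =>
        intro i j hr hij
        exact lt_of_le_of_ne (hrefine i j hr) hij
    | tail _ hstep ih => exact step_preserves hstep ih
  · intro hσ
    -- It suffices to reach 1 from σ, since IncompStep is symmetric.
    have hsymm : Symmetric (Relation.ReflTransGen (IncompStep r)) :=
      fun _ _ h => (@Relation.ReflTransGen.symmetric _ (IncompStep r) ⟨fun _ _ h => h.symm⟩).symm _ _ h
    apply hsymm
    -- strong induction on the number of inversions
    have key : ∀ m : ℕ, ∀ σ : Equiv.Perm (Fin n), (InvSet σ).card ≤ m →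
        (∀ i j : Fin n, r i j → i ≠ j → σ.symm i < σ.symm j) →
        Relation.ReflTransGen (IncompStep r) σ 1 := by
      intro m
      induction m with
      | zero =>
          intro σ hcard _
          -- no inversions: σ is strictly monotone, hence the identity
          have hmono : StrictMono σ := by
            intro a b hab
            by_contra hnot
            have hba : σ b < σ a := by
              rcases lt_or_eq_of_le (not_lt.mp hnot) with h | h
              · exact h
              · exact absurd (σ.injective h) (ne_of_gt hab)
            have : (a, b) ∈ InvSet σ := by
              simp only [InvSet, Finset.mem_filter, Finset.mem_univ, true_and]
              exact ⟨hab, hba⟩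
            have := Finset.card_pos.mpr ⟨_, this⟩
            omega
          rw [strictMono_perm_eq_one σ hmono]
      | succ m ih =>
          intro σ hcard hσ
          by_cases hid : σ = 1
          · rw [hid]
          -- σ ≠ 1 : find an adjacent descent
          have hdesc : ∃ (k : ℕ) (h1 : k < n) (h2 : k + 1 < n),
              σ ⟨k + 1, h2⟩ < σ ⟨k, h1⟩ := by
            by_contra hno
            push_neg at hno
            have hmono : StrictMono σ := by
              intro a b hab
              -- strict mono via consecutive steps
              have step : ∀ (k : ℕ) (h2 : k + 1 < n),
                  σ ⟨k, Nat.lt_of_succ_lt h2⟩ < σ ⟨k + 1, h2⟩ := by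
                intro k h2
                rcases lt_or_eq_of_le (hno k (Nat.lt_of_succ_lt h2) h2) with h | h
                · exact h
                · exact absurd (σ.injective h) (by simp [Fin.ext_iff])
              -- induct on the gap
              obtain ⟨a, ha⟩ := a
              obtain ⟨b, hb⟩ := b
              simp only [Fin.lt_def] at hab
              clear hno
              induction b with
              | zero => omega
              | succ b ihb =>
                  rcases Nat.lt_or_ge a b with h | h
                  · exact lt_trans (ihb (Nat.lt_of_succ_lt hb) h) (step b hb)
                  · have : a = b := by omega
                    subst this
                    exact step a hb
            exact hid (strictMono_perm_eq_one σ hmono)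
          obtain ⟨k, h1, h2, hdk⟩ := hdesc
          -- the two elements at the descent are incomparable
          have hi1 : ¬ r (σ ⟨k, h1⟩) (σ ⟨k + 1, h2⟩) := by
            intro hr
            exact absurd (hrefine _ _ hr) (not_le.mpr hdk)
          have hi2 : ¬ r (σ ⟨k + 1, h2⟩) (σ ⟨k, h1⟩) := by
            intro hr
            by_cases heq : σ ⟨k + 1, h2⟩ = σ ⟨k, h1⟩
            · exact absurd heq (ne_of_lt hdk)
            · have := hσ _ _ hr heq
              simp only [Equiv.symm_apply_apply] at this
              exact absurd this (by simp [Fin.lt_def])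
          set τ : Equiv.Perm (Fin n) := σ * Equiv.swap ⟨k, h1⟩ ⟨k + 1, h2⟩ with hτ
          have hstep : IncompStep r σ τ := ⟨k, h1, h2, hi1, hi2, rfl⟩
          have hcard' : (InvSet τ).card ≤ m := by
            have hlt := invset_decreases h1 h2 σ hdk
            rw [hτ]
            omega
          have hτpres := step_preserves hstep hσ
          exact Relation.ReflTransGen.head hstep (ih τ hcard' hτpres)
    exact key (InvSet σ).card σ le_rfl hσ
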